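/- Let λ be a σ-finite Borel measure on E = ℝ^ℓ ∖ {0} with Λ := ∫_E min(1,|e|²) λ(de) < ∞. Let v : [0,T]×ℝ^k → ℝ belong to the class 𝒰 with constants C ≥ 0 and p ≥ 0. Let β : [0,T]×ℝ^k×E → ℝ^k be Borel measurable with (i) |β(t,x,e)| ≤ C·min(1,|e|), (ii) |β(t,x,e) − β(t,x',e)| ≤ C|x−x'|·min(1,|e|), and (iii) (t,x) ↦ β(t,x,e) continuous for every e ∈ E. Let γ : [0,T]×ℝ^k×E → ℝ be Borel measurable with (i) |γ(t,x,e)| ≤ C·min(1,|e|), (ii) |γ(t,x,e) − γ(t,x',e)| ≤ C·min(1,|e|)·|x−x'|·(1+|x|^p+|x'|^p), and (iii) t ↦ γ(t,x,e) continuous for every (x,e). Then the function Bv : (t,x) ↦ ∫_E γ(t,x,e)(v(t,x+β(t,x,e)) − v(t,x)) λ(de) is well defined and continuous on [0,T]×ℝ^k, and it has polynomial growth in x uniformly in t. -/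

import Mathlib

open MeasureTheory

set_option maxHeartbeats 1000000

/-- Under the class-`𝒰` assumption on `v` and the standard conditions on `β`
and `γ`, the function `Bv(t,x) = ∫ γ(t,x,e)(v(t,x+β(t,x,e)) − v(t,x)) λ(de)` is well
defined (the integrand is integrable) and continuous on `[0,T]×ℝ^k`, with polynomial
growth in `x` uniformly in `t`. -/
theorem nonlocal_operator_continuous_poly_growth {ℓ k : ℕ}
    (hℓ : 1 ≤ ℓ) (hk : 1 ≤ k) (T : ℝ) (hT : 0 < T)
    (lam : Measure (EuclideanSpace ℝ (Fin ℓ))) [SigmaFinite lam]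
    (h0 : lam {0} = 0)
    (hint : Integrable (fun e => min 1 (‖e‖ ^ 2)) lam)
    (C p : ℝ) (hC : 0 ≤ C) (hp : 0 ≤ p)
    (v : ℝ → EuclideanSpace ℝ (Fin k) → ℝ)
    (hvcont : ContinuousOn (fun q : ℝ × EuclideanSpace ℝ (Fin k) => v q.1 q.2)
      (Set.Icc (0 : ℝ) T ×ˢ Set.univ))
    (hvlip : ∀ t ∈ Set.Icc (0 : ℝ) T, ∀ x x',
      |v t x - v t x'| ≤ C * (1 + ‖x‖ ^ p + ‖x'‖ ^ p) * ‖x - x'‖)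
    (β : ℝ → EuclideanSpace ℝ (Fin k) → EuclideanSpace ℝ (Fin ℓ) →
      EuclideanSpace ℝ (Fin k))
    (hβmeas : Measurable (fun q : ℝ × EuclideanSpace ℝ (Fin k) × EuclideanSpace ℝ (Fin ℓ) =>
      β q.1 q.2.1 q.2.2))
    (hβb : ∀ t x e, ‖β t x e‖ ≤ C * min 1 ‖e‖)
    (hβlip : ∀ t x x' e, ‖β t x e - β t x' e‖ ≤ C * ‖x - x'‖ * min 1 ‖e‖)
    (hβcont : ∀ e, ContinuousOn (fun q : ℝ × EuclideanSpace ℝ (Fin k) => β q.1 q.2 e)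
      (Set.Icc (0 : ℝ) T ×ˢ Set.univ))
    (γ : ℝ → EuclideanSpace ℝ (Fin k) → EuclideanSpace ℝ (Fin ℓ) → ℝ)
    (hγmeas : Measurable (fun q : ℝ × EuclideanSpace ℝ (Fin k) × EuclideanSpace ℝ (Fin ℓ) =>
      γ q.1 q.2.1 q.2.2))
    (hγb : ∀ t x e, |γ t x e| ≤ C * min 1 ‖e‖)
    (hγlip : ∀ t x x' e,
      |γ t x e - γ t x' e| ≤ C * min 1 ‖e‖ * ‖x - x'‖ * (1 + ‖x‖ ^ p + ‖x'‖ ^ p))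
    (hγcont : ∀ x e, ContinuousOn (fun t => γ t x e) (Set.Icc (0 : ℝ) T)) :
    (∀ t ∈ Set.Icc (0 : ℝ) T, ∀ x,
      Integrable (fun e => γ t x e * (v t (x + β t x e) - v t x)) lam) ∧
    ContinuousOn
      (fun q : ℝ × EuclideanSpace ℝ (Fin k) =>
        ∫ e, γ q.1 q.2 e * (v q.1 (q.2 + β q.1 q.2 e) - v q.1 q.2) ∂lam)
      (Set.Icc (0 : ℝ) T ×ˢ Set.univ) ∧
    ∃ C' q : ℝ, 0 ≤ C' ∧ 0 ≤ q ∧ ∀ t ∈ Set.Icc (0 : ℝ) T, ∀ x,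
      |∫ e, γ t x e * (v t (x + β t x e) - v t x) ∂lam| ≤ C' * (1 + ‖x‖ ^ q) := by
  have hmn : ∀ e : EuclideanSpace ℝ (Fin ℓ), 0 ≤ min 1 ‖e‖ := fun e =>
    le_min zero_le_one (norm_nonneg e)
  have hm1 : ∀ e : EuclideanSpace ℝ (Fin ℓ), min 1 ‖e‖ ≤ 1 := fun e => min_le_left _ _
  have hmin : ∀ e : EuclideanSpace ℝ (Fin ℓ), min 1 ‖e‖ * min 1 ‖e‖ = min 1 (‖e‖ ^ 2) := by
    intro e
    rcases le_total ‖e‖ 1 with h | h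
    · rw [min_eq_right h, min_eq_right (by nlinarith [norm_nonneg e])]; ring
    · rw [min_eq_left h, min_eq_left (by nlinarith [norm_nonneg e])]; ring
  have hm2 : ∀ e : EuclideanSpace ℝ (Fin ℓ), 0 ≤ min 1 (‖e‖ ^ 2) := fun e =>
    le_min zero_le_one (by positivity)
  -- key pointwise bound
  have key : ∀ t ∈ Set.Icc (0 : ℝ) T, ∀ x e,
      |γ t x e * (v t (x + β t x e) - v t x)| ≤
        C ^ 3 * (1 + (‖x‖ + C) ^ p + ‖x‖ ^ p) * min 1 (‖e‖ ^ 2) := by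
    intro t ht x e
    have h1 : |γ t x e| ≤ C * min 1 ‖e‖ := hγb t x e
    have hβn : ‖β t x e‖ ≤ C * min 1 ‖e‖ := hβb t x e
    have hxb : ‖x + β t x e‖ ≤ ‖x‖ + C := by
      have := norm_add_le x (β t x e)
      nlinarith [hmn e, hm1 e]
    have hpw : ‖x + β t x e‖ ^ p ≤ (‖x‖ + C) ^ p :=
      Real.rpow_le_rpow (norm_nonneg _) hxb hp
    have h2 : |v t (x + β t x e) - v t x| ≤
        C * (1 + (‖x‖ + C) ^ p + ‖x‖ ^ p) * (C * min 1 ‖e‖) := by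
      have hb : ‖x + β t x e - x‖ ≤ C * min 1 ‖e‖ := by simpa using hβn
      calc |v t (x + β t x e) - v t x|
          ≤ C * (1 + ‖x + β t x e‖ ^ p + ‖x‖ ^ p) * ‖x + β t x e - x‖ := hvlip t ht _ _
        _ ≤ C * (1 + (‖x‖ + C) ^ p + ‖x‖ ^ p) * (C * min 1 ‖e‖) := by
            apply mul_le_mul _ hb (norm_nonneg _) (by positivity)
            apply mul_le_mul_of_nonneg_left _ hC
            linarith
    calc |γ t x e * (v t (x + β t x e) - v t x)|
        = |γ t x e| * |v t (x + β t x e) - v t x| := abs_mul _ _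
      _ ≤ (C * min 1 ‖e‖) * (C * (1 + (‖x‖ + C) ^ p + ‖x‖ ^ p) * (C * min 1 ‖e‖)) :=
          mul_le_mul h1 h2 (abs_nonneg _) (by positivity)
      _ = C ^ 3 * (1 + (‖x‖ + C) ^ p + ‖x‖ ^ p) * (min 1 ‖e‖ * min 1 ‖e‖) := by ring
      _ = C ^ 3 * (1 + (‖x‖ + C) ^ p + ‖x‖ ^ p) * min 1 (‖e‖ ^ 2) := by rw [hmin e]
  -- measurability of the integrand for fixed (t, x)
  have mF : ∀ t ∈ Set.Icc (0 : ℝ) T, ∀ x,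
      Measurable (fun e => γ t x e * (v t (x + β t x e) - v t x)) := by
    intro t ht x
    have hpair : Measurable (fun e : EuclideanSpace ℝ (Fin ℓ) =>
        ((t, (x, e)) : ℝ × EuclideanSpace ℝ (Fin k) × EuclideanSpace ℝ (Fin ℓ))) :=
      measurable_const.prodMk (measurable_const.prodMk measurable_id)
    have mγ : Measurable fun e => γ t x e := hγmeas.comp hpair
    have mβ : Measurable fun e => β t x e := hβmeas.comp hpair
    have hvt : Continuous (v t) := by
      have hmap : Set.MapsTo (fun y : EuclideanSpace ℝ (Fin k) => ((t : ℝ), y))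
          Set.univ (Set.Icc (0 : ℝ) T ×ˢ Set.univ) := fun y _ => ⟨ht, Set.mem_univ y⟩
      have h := hvcont.comp
        ((continuous_const.prodMk continuous_id :
          Continuous fun y : EuclideanSpace ℝ (Fin k) => ((t : ℝ), y)).continuousOn) hmap
      exact continuousOn_univ.mp h
    exact mγ.mul ((hvt.measurable.comp (measurable_const.add mβ)).sub measurable_const)
  -- integrability
  have hInt : ∀ t ∈ Set.Icc (0 : ℝ) T, ∀ x,
      Integrable (fun e => γ t x e * (v t (x + β t x e) - v t x)) lam := by
    intro t ht x
    refine (hint.const_mul (C ^ 3 * (1 + (‖x‖ + C) ^ p + ‖x‖ ^ p))).mono'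
      (mF t ht x).aestronglyMeasurable ?_
    refine Filter.Eventually.of_forall fun e => ?_
    rw [Real.norm_eq_abs]
    simpa [mul_assoc] using key t ht x e
  refine ⟨hInt, ?_, ?_⟩
  · -- continuity
    rintro ⟨t₀, x₀⟩ ⟨ht₀, -⟩
    set K₀ : ℝ := C ^ 3 * (1 + (‖x₀‖ + 1 + C) ^ p + (‖x₀‖ + 1) ^ p) with hK₀
    apply continuousWithinAt_of_dominated (bound := fun e => K₀ * min 1 (‖e‖ ^ 2))
    · filter_upwards [self_mem_nhdsWithin] with q hq
      exact (mF q.1 hq.1 q.2).aestronglyMeasurable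
    · have hU : {q : ℝ × EuclideanSpace ℝ (Fin k) | ‖q.2 - x₀‖ < 1} ∈
          nhdsWithin (t₀, x₀) (Set.Icc (0 : ℝ) T ×ˢ Set.univ) := by
        apply mem_nhdsWithin_of_mem_nhds
        apply IsOpen.mem_nhds
        · exact isOpen_lt ((continuous_snd.sub continuous_const).norm) continuous_const
        · simp
      filter_upwards [self_mem_nhdsWithin, hU] with q hq hq1
      refine Filter.Eventually.of_forall fun e => ?_
      rw [Real.norm_eq_abs]
      refine (key q.1 hq.1 q.2 e).trans ?_
      apply mul_le_mul_of_nonneg_right _ (hm2 e)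
      have hx : ‖q.2‖ ≤ ‖x₀‖ + 1 := by
        have h := norm_add_le (q.2 - x₀) x₀
        simp only [sub_add_cancel] at h
        have : ‖q.2 - x₀‖ < 1 := hq1
        linarith
      have hA : (‖q.2‖ + C) ^ p ≤ (‖x₀‖ + 1 + C) ^ p :=
        Real.rpow_le_rpow (by positivity) (by linarith) hp
      have hB : ‖q.2‖ ^ p ≤ (‖x₀‖ + 1) ^ p :=
        Real.rpow_le_rpow (norm_nonneg _) (by linarith) hp
      have hC3 : (0 : ℝ) ≤ C ^ 3 := by positivity
      rw [hK₀]
      nlinarith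
    · exact hint.const_mul K₀
    · refine Filter.Eventually.of_forall fun e => ?_
      have hγj : ContinuousWithinAt (fun q : ℝ × EuclideanSpace ℝ (Fin k) => γ q.1 q.2 e)
          (Set.Icc (0 : ℝ) T ×ˢ Set.univ) (t₀, x₀) := by
        have h2 : ContinuousWithinAt (fun q : ℝ × EuclideanSpace ℝ (Fin k) => γ q.1 x₀ e)
            (Set.Icc (0 : ℝ) T ×ˢ Set.univ) (t₀, x₀) :=
          (hγcont x₀ e t₀ ht₀).comp (g := fun t => γ t x₀ e) (f := Prod.fst)
            (t := Set.Icc (0 : ℝ) T) continuous_fst.continuousWithinAt fun q hq => hq.1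
        have h1 : Filter.Tendsto
            (fun q : ℝ × EuclideanSpace ℝ (Fin k) => γ q.1 q.2 e - γ q.1 x₀ e)
            (nhdsWithin (t₀, x₀) (Set.Icc (0 : ℝ) T ×ˢ Set.univ)) (nhds 0) := by
          have hgt : Filter.Tendsto
              (fun q : ℝ × EuclideanSpace ℝ (Fin k) =>
                C * min 1 ‖e‖ * ‖q.2 - x₀‖ * (1 + ‖q.2‖ ^ p + ‖x₀‖ ^ p))
              (nhdsWithin (t₀, x₀) (Set.Icc (0 : ℝ) T ×ˢ Set.univ)) (nhds 0) := by
            have c1 : Continuous fun q : ℝ × EuclideanSpace ℝ (Fin k) => ‖q.2 - x₀‖ :=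
              (continuous_snd.sub continuous_const).norm
            have c2 : Continuous fun q : ℝ × EuclideanSpace ℝ (Fin k) => ‖q.2‖ ^ p := by
              refine continuous_iff_continuousAt.2 fun q => ?_
              exact (Real.continuousAt_rpow_const _ p (Or.inr hp)).comp
                continuous_snd.norm.continuousAt
            have hcg : Continuous fun q : ℝ × EuclideanSpace ℝ (Fin k) =>
                C * min 1 ‖e‖ * ‖q.2 - x₀‖ * (1 + ‖q.2‖ ^ p + ‖x₀‖ ^ p) :=
              ((continuous_const.mul c1).mul ((continuous_const.add c2).add continuous_const))
            have h0' : C * min 1 ‖e‖ * ‖x₀ - x₀‖ * (1 + ‖x₀‖ ^ p + ‖x₀‖ ^ p) = 0 := by simp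
            have h5 := (hcg.continuousWithinAt
              (s := Set.Icc (0 : ℝ) T ×ˢ Set.univ) (x := (t₀, x₀)))
            unfold ContinuousWithinAt at h5
            simpa using h5
          refine squeeze_zero_norm (fun q => ?_) hgt
          rw [Real.norm_eq_abs]
          exact hγlip q.1 q.2 x₀ e
        have hsum := h1.add h2
        have : ContinuousWithinAt
            (fun q : ℝ × EuclideanSpace ℝ (Fin k) =>
              (γ q.1 q.2 e - γ q.1 x₀ e) + γ q.1 x₀ e)
            (Set.Icc (0 : ℝ) T ×ˢ Set.univ) (t₀, x₀) := by
          unfold ContinuousWithinAt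
          simpa using hsum
        simpa using this
      have hvβ : ContinuousWithinAt
          (fun q : ℝ × EuclideanSpace ℝ (Fin k) => v q.1 (q.2 + β q.1 q.2 e))
          (Set.Icc (0 : ℝ) T ×ˢ Set.univ) (t₀, x₀) := by
        have hin : ContinuousWithinAt
            (fun q : ℝ × EuclideanSpace ℝ (Fin k) => (q.1, q.2 + β q.1 q.2 e))
            (Set.Icc (0 : ℝ) T ×ˢ Set.univ) (t₀, x₀) :=
          continuous_fst.continuousWithinAt.prodMk
            (continuous_snd.continuousWithinAt.add ((hβcont e) (t₀, x₀) ⟨ht₀, trivial⟩))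
        exact ContinuousWithinAt.comp
          (g := fun q : ℝ × EuclideanSpace ℝ (Fin k) => v q.1 q.2)
          (f := fun q : ℝ × EuclideanSpace ℝ (Fin k) => (q.1, q.2 + β q.1 q.2 e))
          (t := Set.Icc (0 : ℝ) T ×ˢ Set.univ)
          (hvcont (t₀, x₀ + β t₀ x₀ e) ⟨ht₀, trivial⟩) hin
          (fun q hq => ⟨hq.1, trivial⟩)
      have hv0 : ContinuousWithinAt
          (fun q : ℝ × EuclideanSpace ℝ (Fin k) => v q.1 q.2)
          (Set.Icc (0 : ℝ) T ×ˢ Set.univ) (t₀, x₀) := hvcont _ ⟨ht₀, trivial⟩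
      exact hγj.mul (hvβ.sub hv0)
  · -- polynomial growth
    obtain ⟨Λ, hΛ⟩ : ∃ L : ℝ, L = ∫ e, min 1 (‖e‖ ^ 2) ∂lam := ⟨_, rfl⟩
    have hΛ0 : 0 ≤ Λ := hΛ ▸ integral_nonneg fun e => hm2 e
    obtain ⟨D, hD'⟩ : ∃ d : ℝ, d = (1 + C) ^ p * 2 ^ p := ⟨_, rfl⟩
    have hD1 : (1 : ℝ) ≤ (1 + C) ^ p := by
      have := Real.rpow_le_rpow zero_le_one (by linarith : (1 : ℝ) ≤ 1 + C) hp
      simpa [Real.one_rpow] using this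
    have hD2 : (1 : ℝ) ≤ (2 : ℝ) ^ p := by
      have := Real.rpow_le_rpow zero_le_one (by norm_num : (1 : ℝ) ≤ 2) hp
      simpa [Real.one_rpow] using this
    have hDge : (1 : ℝ) ≤ D := by rw [hD']; nlinarith
    have hDpos : (0 : ℝ) ≤ D := by linarith
    have hDb : ∀ x : EuclideanSpace ℝ (Fin k), (‖x‖ + C) ^ p ≤ D * (1 + ‖x‖ ^ p) := by
      intro x
      have h1 : ‖x‖ + C ≤ (1 + C) * (1 + ‖x‖) := by nlinarith [norm_nonneg x]
      have h2 : (‖x‖ + C) ^ p ≤ ((1 + C) * (1 + ‖x‖)) ^ p :=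
        Real.rpow_le_rpow (by positivity) h1 hp
      rw [Real.mul_rpow (by positivity) (by positivity)] at h2
      have h3 : (1 + ‖x‖) ^ p ≤ 2 ^ p * (1 + ‖x‖ ^ p) := by
        rcases le_total ‖x‖ 1 with h | h
        · have h4 : (1 + ‖x‖) ^ p ≤ (2 : ℝ) ^ p :=
            Real.rpow_le_rpow (by positivity) (by linarith) hp
          nlinarith [Real.rpow_nonneg (norm_nonneg x) p,
            Real.rpow_nonneg (show (0 : ℝ) ≤ 2 by norm_num) p]
        · have h4 : (1 + ‖x‖) ^ p ≤ (2 * ‖x‖) ^ p :=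
            Real.rpow_le_rpow (by positivity) (by linarith) hp
          rw [Real.mul_rpow (by norm_num) (norm_nonneg x)] at h4
          nlinarith [Real.rpow_nonneg (show (0 : ℝ) ≤ 2 by norm_num) p]
      calc (‖x‖ + C) ^ p ≤ (1 + C) ^ p * (1 + ‖x‖) ^ p := h2
        _ ≤ (1 + C) ^ p * (2 ^ p * (1 + ‖x‖ ^ p)) :=
            mul_le_mul_of_nonneg_left h3 (by linarith)
        _ = D * (1 + ‖x‖ ^ p) := by rw [hD']; ring
    refine ⟨3 * D * C ^ 3 * Λ, p, by positivity, hp, fun t ht x => ?_⟩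
    obtain ⟨K, hK⟩ : ∃ r : ℝ, r = C ^ 3 * (1 + (‖x‖ + C) ^ p + ‖x‖ ^ p) := ⟨_, rfl⟩
    have hKnn : 0 ≤ K := by rw [hK]; positivity
    have step1 : |∫ e, γ t x e * (v t (x + β t x e) - v t x) ∂lam| ≤
        ∫ e, |γ t x e * (v t (x + β t x e) - v t x)| ∂lam := by
      exact norm_integral_le_integral_norm (μ := lam)
        (fun e => γ t x e * (v t (x + β t x e) - v t x))
    have step2 : ∫ e, |γ t x e * (v t (x + β t x e) - v t x)| ∂lam ≤
        ∫ e, K * min 1 (‖e‖ ^ 2) ∂lam := by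
      refine integral_mono (hInt t ht x).abs (hint.const_mul K) fun e => ?_
      simpa [hK, mul_assoc] using key t ht x e
    have step3 : ∫ e, K * min 1 (‖e‖ ^ 2) ∂lam = K * Λ := by
      rw [hΛ]
      exact integral_const_mul K _
    have hKb : K ≤ 3 * D * C ^ 3 * (1 + ‖x‖ ^ p) := by
      have h1 := hDb x
      have h2 : ‖x‖ ^ p ≤ D * (1 + ‖x‖ ^ p) := by
        nlinarith [Real.rpow_nonneg (norm_nonneg x) p]
      have h3 : (1 : ℝ) ≤ D * (1 + ‖x‖ ^ p) := by
        nlinarith [Real.rpow_nonneg (norm_nonneg x) p]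
      have hC3 : (0 : ℝ) ≤ C ^ 3 := by positivity
      rw [hK]
      calc C ^ 3 * (1 + (‖x‖ + C) ^ p + ‖x‖ ^ p)
          ≤ C ^ 3 * (3 * (D * (1 + ‖x‖ ^ p))) :=
            mul_le_mul_of_nonneg_left (by linarith) hC3
        _ = 3 * D * C ^ 3 * (1 + ‖x‖ ^ p) := by ring
    have hfin : K * Λ ≤ 3 * D * C ^ 3 * (1 + ‖x‖ ^ p) * Λ :=
      mul_le_mul_of_nonneg_right hKb hΛ0
    calc |∫ e, γ t x e * (v t (x + β t x e) - v t x) ∂lam|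
        ≤ ∫ e, |γ t x e * (v t (x + β t x e) - v t x)| ∂lam := step1
      _ ≤ ∫ e, K * min 1 (‖e‖ ^ 2) ∂lam := step2
      _ = K * Λ := step3
      _ ≤ 3 * D * C ^ 3 * (1 + ‖x‖ ^ p) * Λ := hfin
      _ = 3 * D * C ^ 3 * Λ * (1 + ‖x‖ ^ p) := by ring
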